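/- Let 𝒜 ⊆ 2^[n] be a union-closed family with ∅ ∈ 𝒜 and U(𝒜) = [n], and let c_1, …, c_n be nonnegative integers with c_1 + ⋯ + c_n ≥ 1. If every union-closed family ℬ ⊆ 2^[n] satisfying {A ∪ S : A ∈ 𝒜, S ∈ ℬ} ⊆ ℬ obeys Σ_{S ∈ ℬ} ( Σ_{i ∈ S} c_i − Σ_{i ∈ [n]\S} c_i ) ≥ 0, then 𝒜 is a Frankl-Complete family. -/

import Mathlib

/-- A family of sets is union-closed. -/
def UC (F : Finset (Finset ℕ)) : Prop := ∀ A ∈ F, ∀ B ∈ F, A ∪ B ∈ F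

/-- `famU F` is the union `U(F)` of all members of the family `F`. -/
def famU (F : Finset (Finset ℕ)) : Finset ℕ := F.sup id

/-- `memFam F i` is the subfamily `F_i` of sets in `F` containing `i`. -/
def memFam (F : Finset (Finset ℕ)) (i : ℕ) : Finset (Finset ℕ) :=
  F.filter (fun S => i ∈ S)

/-- `A` is Frankl-Complete: every union-closed family containing `A` has an
element of `U(A)` belonging to at least half of its sets. -/
def FC (A : Finset (Finset ℕ)) : Prop :=
  ∀ F : Finset (Finset ℕ), UC F → A ⊆ F →
    ∃ i ∈ famU A, 2 * (memFam F i).card ≥ F.card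

/-- `uplus A B = {a ∪ b : a ∈ A, b ∈ B}`. -/
def uplus (A B : Finset (Finset ℕ)) : Finset (Finset ℕ) :=
  (A ×ˢ B).image (fun p => p.1 ∪ p.2)

theorem fc_of_int_system_infeasible (n : ℕ) (A : Finset (Finset ℕ))
    (hsub : A ⊆ (Finset.Icc 1 n).powerset) (hUC : UC A) (hemp : ∅ ∈ A)
    (hU : famU A = Finset.Icc 1 n)
    (c : ℕ → ℤ) (hc : ∀ i ∈ Finset.Icc 1 n, 0 ≤ c i)
    (hcsum : 1 ≤ ∑ i ∈ Finset.Icc 1 n, c i)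
    (h : ∀ B : Finset (Finset ℕ), B ⊆ (Finset.Icc 1 n).powerset → UC B →
      uplus A B ⊆ B →
      0 ≤ ∑ S ∈ B, ((∑ i ∈ S, c i) - ∑ i ∈ Finset.Icc 1 n \ S, c i)) :
    FC A := by
  intro F hUCF hAF
  set N := Finset.Icc 1 n with hNdef
  set g : Finset ℕ → ℤ := fun S => ∑ i ∈ N, (if i ∈ S then c i else -c i) with hg
  -- g on subsets of N matches the expression in h
  have hgsub : ∀ S : Finset ℕ, S ⊆ N → g S = (∑ i ∈ S, c i) - ∑ i ∈ N \ S, c i := by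
    intro S hS
    rw [hg]
    simp only [Finset.sum_ite, Finset.sum_neg_distrib]
    rw [Finset.filter_mem_eq_inter, Finset.inter_eq_right.mpr hS, ← Finset.sdiff_eq_filter]
    ring
  -- total sum nonneg
  have key : (0:ℤ) ≤ ∑ S ∈ F, g S := by
    have htot : ∑ T ∈ F.image (fun S => S \ N), ∑ S ∈ F.filter (fun S => S \ N = T), g S
        = ∑ S ∈ F, g S :=
      Finset.sum_fiberwise_of_maps_to (fun x hx => Finset.mem_image_of_mem _ hx) g
    rw [← htot]
    apply Finset.sum_nonneg
    intro T hT
    set FT := F.filter (fun S => S \ N = T) with hFT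
    set B := FT.image (fun S => S ∩ N) with hB
    have hmemFT : ∀ S, S ∈ FT → S ∈ F ∧ S \ N = T := fun S hS => Finset.mem_filter.mp hS
    have hrecon : ∀ S ∈ FT, S ∩ N ∪ T = S := by
      intro S hS
      rw [← (hmemFT S hS).2]
      ext x
      simp only [Finset.mem_union, Finset.mem_inter, Finset.mem_sdiff]
      tauto
    have hinj : ∀ S ∈ FT, ∀ S' ∈ FT, S ∩ N = S' ∩ N → S = S' := by
      intro S hS S' hS' hEq
      rw [← hrecon S hS, ← hrecon S' hS', hEq]
    have hFTmem : ∀ a ∈ A, ∀ S ∈ FT, a ∪ S ∈ FT := by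
      intro a ha S hS
      obtain ⟨hSF, hST⟩ := hmemFT S hS
      have haN : a ⊆ N := Finset.mem_powerset.mp (hsub ha)
      refine Finset.mem_filter.mpr ⟨hUCF a (hAF ha) S hSF, ?_⟩
      rw [Finset.union_sdiff_distrib, Finset.sdiff_eq_empty_iff_subset.mpr haN,
        Finset.empty_union, hST]
    have hB1 : B ⊆ N.powerset := by
      intro x hx
      obtain ⟨S, hS, rfl⟩ := Finset.mem_image.mp hx
      exact Finset.mem_powerset.mpr Finset.inter_subset_right
    have hB2 : UC B := by
      intro x hx y hy
      obtain ⟨S, hS, rfl⟩ := Finset.mem_image.mp hx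
      obtain ⟨S', hS', rfl⟩ := Finset.mem_image.mp hy
      have hun : S ∪ S' ∈ FT := by
        obtain ⟨h1, h1'⟩ := hmemFT S hS
        obtain ⟨h2, h2'⟩ := hmemFT S' hS'
        refine Finset.mem_filter.mpr ⟨hUCF S h1 S' h2, ?_⟩
        rw [Finset.union_sdiff_distrib, h1', h2', Finset.union_self]
      refine Finset.mem_image.mpr ⟨S ∪ S', hun, ?_⟩
      rw [Finset.union_inter_distrib_right]
    have hB3 : uplus A B ⊆ B := by
      intro x hx
      obtain ⟨⟨a, b⟩, hab, rfl⟩ := Finset.mem_image.mp hx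
      obtain ⟨ha, hb⟩ := Finset.mem_product.mp hab
      obtain ⟨S, hS, rfl⟩ := Finset.mem_image.mp hb
      have haN : a ⊆ N := Finset.mem_powerset.mp (hsub ha)
      refine Finset.mem_image.mpr ⟨a ∪ S, hFTmem a ha S hS, ?_⟩
      rw [Finset.union_inter_distrib_right, Finset.inter_eq_left.mpr haN]
    have hh := h B hB1 hB2 hB3
    have heq : ∑ S ∈ B, ((∑ i ∈ S, c i) - ∑ i ∈ N \ S, c i) = ∑ S ∈ FT, g S := by
      rw [Finset.sum_congr rfl
        (fun S hS => (hgsub S (Finset.mem_powerset.mp (hB1 hS))).symm)]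
      rw [hB, Finset.sum_image hinj]
      refine Finset.sum_congr rfl fun S hS => ?_
      rw [hg]
      refine Finset.sum_congr rfl fun i hi => ?_
      simp [Finset.mem_inter, hi]
    rw [← heq]
    exact hh
  -- swap sums
  have swap : ∑ S ∈ F, g S = ∑ i ∈ N, c i * (2 * ((memFam F i).card : ℤ) - F.card) := by
    rw [hg, Finset.sum_comm]
    refine Finset.sum_congr rfl fun i hi => ?_
    rw [Finset.sum_ite, Finset.sum_const, Finset.sum_const, nsmul_eq_mul, nsmul_eq_mul, memFam]
    have hcard : (F.filter (fun S => i ∈ S)).card + (F.filter (fun S => ¬ i ∈ S)).card = F.card :=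
      Finset.card_filter_add_card_filter_not (fun S => i ∈ S)
    have h2 : ((F.filter (fun S => ¬ i ∈ S)).card : ℤ)
        = (F.card : ℤ) - ((F.filter (fun S => i ∈ S)).card : ℤ) := by
      push_cast [← hcard]; ring
    rw [h2]
    ring
  -- conclude
  by_contra hcon
  push_neg at hcon
  have hbound : ∑ S ∈ F, g S ≤ -∑ i ∈ N, c i := by
    rw [swap, ← Finset.sum_neg_distrib]
    refine Finset.sum_le_sum fun i hi => ?_
    have hlt : 2 * (memFam F i).card < F.card := by
      have := hcon i (by rw [hU]; exact hi)
      omega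
    have hz : 2 * ((memFam F i).card : ℤ) - F.card ≤ -1 := by push_cast; omega
    have := mul_le_mul_of_nonneg_left hz (hc i hi)
    linarith
  linarith [key, hbound, hcsum]
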